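/- For n a positive integer and θ₁, θ₂ ∈ (0,1), the 3×3 matrix (1-θ₁)ⁿ(1-θ₂)ⁿ · [[1+e^{-n(μ₁+μ₂)}, e^{-nμ₁}, e^{-nμ₂}], [1+e^{-nμ₂}, e^{-n(μ₁+μ₂)}, e^{-nμ₂}], [1+e^{-nμ₁}, e^{-nμ₁}, e^{-n(μ₁+μ₂)}]], where e^{-μ₁} = θ₁(1-θ₂)/(1-θ₁)² and e^{-μ₂} = θ₂(1-θ₁)/(1-θ₂)², has spectral radius Λₙ(θ₁,θ₂) = (1-θ₁)ⁿ(1-θ₂)ⁿ / ((1-θ₁⁽ⁿ⁾)(1-θ₂⁽ⁿ⁾)), where θ₁⁽ⁿ⁾, θ₂⁽ⁿ⁾ ∈ (0,1) are defined by θᵢ⁽ⁿ⁾(1-θ_{3-i}⁽ⁿ⁾)/(1-θᵢ⁽ⁿ⁾)² = (θᵢ(1-θ_{3-i})/(1-θᵢ)²)ⁿ for i = 1,2. -/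

import Mathlib

set_option maxHeartbeats 1000000

lemma quadBound (β γ s : ℝ) (hs : 0 < s) (hγs : γ ≤ s^2)
    (hβ1 : β*s ≤ s^2 + γ) (hβ2 : -(s^2+γ) ≤ β*s)
    (μ : ℂ) (h : μ^2 + (β:ℂ)*μ + (γ:ℂ) = 0) : ‖μ‖ ≤ s := by
  have h1 := congrArg Complex.re h
  have h2 := congrArg Complex.im h
  simp [pow_two, Complex.mul_re, Complex.mul_im] at h1 h2
  set ξ := μ.re with hξdef
  set η := μ.im with hηdef
  have hsq : ξ^2 + η^2 ≤ s^2 := by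
    have him : η * (2*ξ + β) = 0 := by nlinarith [h2]
    rcases mul_eq_zero.mp him with hη | hβξ'
    · have hre : ξ^2 + β*ξ + γ = 0 := by nlinarith [h1, sq_nonneg η, hη]
      have hb : ξ^2 ≤ s^2 := by
        have hA : ξ ≤ s := by
          by_contra hc; push_neg at hc
          nlinarith [mul_pos (sub_pos.mpr hc) hs]
        have hB : -s ≤ ξ := by
          by_contra hc; push_neg at hc
          nlinarith [mul_pos (show (0:ℝ) < -s - ξ by linarith) hs]
        nlinarith
      rw [hη]; nlinarith
    · have hβξ : β = -2*ξ := by linarith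
      have : η^2 = γ - ξ^2 := by rw [hβξ] at h1; nlinarith
      nlinarith
  have habs : ‖μ‖^2 ≤ s^2 := by
    rw [Complex.sq_norm, Complex.normSq_apply, ← hξdef, ← hηdef]; nlinarith
  nlinarith [norm_nonneg μ]

lemma detFormula (a b c : ℝ) (μ : ℂ) :
    (algebraMap ℂ (Matrix (Fin 3) (Fin 3) ℂ) μ - ((c : ℝ) : ℂ) •
      !![((1 + a * b : ℝ) : ℂ), ((a : ℝ) : ℂ), ((b : ℝ) : ℂ);
         ((1 + b : ℝ) : ℂ), ((a * b : ℝ) : ℂ), ((b : ℝ) : ℂ);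
         ((1 + a : ℝ) : ℂ), ((a : ℝ) : ℂ), ((a * b : ℝ) : ℂ)]).det
    = μ^3 - (((1+3*(a*b))*c : ℝ) : ℂ) * μ^2 + (((3*(a*b)^2-a-b-a*b)*c^2 : ℝ) : ℂ) * μ
      - ((a*b*(1-a*b)^2*c^3 : ℝ) : ℂ) := by
  rw [Matrix.det_fin_three]
  simp [Matrix.algebraMap_matrix_apply, Matrix.smul_apply]
  ring

lemma habdAux (u v : ℝ) (hune : (1:ℝ)-u ≠ 0) (hvne : (1:ℝ)-v ≠ 0) :
    (u*(1-v)/(1-u)^2)*(v*(1-u)/(1-v)^2)*((1-u)*(1-v)) = u*v := by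
  field_simp

set_option maxHeartbeats 1000000 in
lemma habd2Aux (u v : ℝ) (hune : (1:ℝ)-u ≠ 0) (hvne : (1:ℝ)-v ≠ 0) :
    (u*(1-v)/(1-u)^2)*(v*(1-u)/(1-v)^2)*(1-(u*(1-v)/(1-u)^2)*(v*(1-u)/(1-v)^2))^2*((1-u)*(1-v))^3
      = u*v*(1-u-v)^2 := by
  field_simp; ring

set_option maxHeartbeats 1000000 in
lemma eq2dAux (u v : ℝ) (hune : (1:ℝ)-u ≠ 0) (hvne : (1:ℝ)-v ≠ 0) :
    (3*((u*(1-v)/(1-u)^2)*(v*(1-u)/(1-v)^2))^2-(u*(1-v)/(1-u)^2)-(v*(1-u)/(1-v)^2)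
      -(u*(1-v)/(1-u)^2)*(v*(1-u)/(1-v)^2))*((1-u)*(1-v))^2
    = (u*(1-v)/(1-u)^2)*(v*(1-u)/(1-v)^2)*(1-(u*(1-v)/(1-u)^2)*(v*(1-u)/(1-v)^2))^2*((1-u)*(1-v))^3
      + (1+3*((u*(1-v)/(1-u)^2)*(v*(1-u)/(1-v)^2)))*((1-u)*(1-v)) - 1 := by
  field_simp; ring

lemma keyG (u v : ℝ) (hu : 0 < u) (hu1 : u < 1) (hv : 0 < v) (hv1 : v < 1) :
    u*v*(1-u-v)^2 ≤ 1 := by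
  nlinarith [mul_nonneg (mul_nonneg hu.le hv.le)
      (mul_nonneg (by linarith : (0:ℝ) ≤ u+v) (by linarith : (0:ℝ) ≤ 2-u-v)),
    mul_pos hu hv]

lemma keyF (u v : ℝ) (hu : 0 < u) (hu1 : u < 1) (hv : 0 < v) (hv1 : v < 1) :
    (1-u)*(1-v) + 3*(u*v) ≤ 2 + u*v*(1-u-v)^2 := by
  nlinarith [sq_nonneg (u-v), sq_nonneg (u+v-2), mul_pos hu hv,
    mul_nonneg hu.le hv.le,
    mul_pos (mul_pos hu hv) (mul_pos (show (0:ℝ) < 1-u by linarith)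
      (show (0:ℝ) < 1-v by linarith)),
    sq_nonneg ((1-u)+(1-v)),
    mul_nonneg (mul_nonneg hu.le hv.le) (sq_nonneg (u+v-2))]

lemma ineqB (u v c d : ℝ) (hd : 0 ≤ d) (huv : 0 ≤ u*v) (hw : 0 ≤ u*v*(1-u-v)^2) :
    (1-d-3*(u*v))*c^2 ≤ c^2 + u*v*(1-u-v)^2*c^2 := by
  nlinarith [mul_nonneg (add_nonneg (add_nonneg hd (by linarith : (0:ℝ) ≤ 3*(u*v))) hw)
    (sq_nonneg c)]

lemma ineqC (u v c d : ℝ) (hF : d + 3*(u*v) ≤ 2 + u*v*(1-u-v)^2) :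
    -(c^2 + u*v*(1-u-v)^2*c^2) ≤ (1-d-3*(u*v))*c^2 := by
  nlinarith [mul_nonneg (by linarith : (0:ℝ) ≤ 2 + u*v*(1-u-v)^2 - (d + 3*(u*v)))
    (sq_nonneg c)]

theorem stmt6 (θ₁ θ₂ : ℝ) (hθ₁ : θ₁ ∈ Set.Ioo (0:ℝ) 1) (hθ₂ : θ₂ ∈ Set.Ioo (0:ℝ) 1)
    (n : ℕ) (hn : 1 ≤ n)
    (e₁ e₂ : ℝ)
    (he₁ : e₁ = θ₁ * (1 - θ₂) / (1 - θ₁) ^ 2)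
    (he₂ : e₂ = θ₂ * (1 - θ₁) / (1 - θ₂) ^ 2)
    (θ₁' θ₂' : ℝ) (hθ₁' : θ₁' ∈ Set.Ioo (0:ℝ) 1) (hθ₂' : θ₂' ∈ Set.Ioo (0:ℝ) 1)
    (h₁' : θ₁' * (1 - θ₂') / (1 - θ₁') ^ 2 = e₁ ^ n)
    (h₂' : θ₂' * (1 - θ₁') / (1 - θ₂') ^ 2 = e₂ ^ n)
    (Λ : ℝ)
    (hΛ : Λ = (1 - θ₁) ^ n * (1 - θ₂) ^ n / ((1 - θ₁') * (1 - θ₂')))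
    (M : Matrix (Fin 3) (Fin 3) ℂ)
    (hM : M = (((1 - θ₁) ^ n * (1 - θ₂) ^ n : ℝ) : ℂ) •
      !![((1 + e₁ ^ n * e₂ ^ n : ℝ) : ℂ), ((e₁ ^ n : ℝ) : ℂ), ((e₂ ^ n : ℝ) : ℂ);
         ((1 + e₂ ^ n : ℝ) : ℂ), ((e₁ ^ n * e₂ ^ n : ℝ) : ℂ), ((e₂ ^ n : ℝ) : ℂ);
         ((1 + e₁ ^ n : ℝ) : ℂ), ((e₁ ^ n : ℝ) : ℂ), ((e₁ ^ n * e₂ ^ n : ℝ) : ℂ)]) :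
    (Λ : ℂ) ∈ spectrum ℂ M ∧ ∀ μ ∈ spectrum ℂ M, ‖μ‖ ≤ Λ := by
  obtain ⟨hu, hu1⟩ := hθ₁'
  obtain ⟨hv, hv1⟩ := hθ₂'
  have hune : (1:ℝ) - θ₁' ≠ 0 := by linarith
  have hvne : (1:ℝ) - θ₂' ≠ 0 := by linarith
  set u := θ₁'
  set v := θ₂'
  set a := e₁ ^ n with hadef
  set b := e₂ ^ n with hbdef
  set c := (1 - θ₁) ^ n * (1 - θ₂) ^ n with hcdef
  have hc : 0 < c := by
    have h1 : (0:ℝ) < 1 - θ₁ := by linarith [hθ₁.2]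
    have h2 : (0:ℝ) < 1 - θ₂ := by linarith [hθ₂.2]
    rw [hcdef]; positivity
  set d := (1-u)*(1-v) with hddef
  have hd : 0 < d := by
    rw [hddef]; exact mul_pos (by linarith) (by linarith)
  have hdne : d ≠ 0 := ne_of_gt hd
  have ha : a = u*(1-v)/(1-u)^2 := h₁'.symm
  have hb : b = v*(1-u)/(1-v)^2 := h₂'.symm
  have ha0 : 0 ≤ a := by
    rw [ha]
    exact div_nonneg (mul_nonneg hu.le (by linarith)) (sq_nonneg _)
  have hb0 : 0 ≤ b := by
    rw [hb]
    exact div_nonneg (mul_nonneg hv.le (by linarith)) (sq_nonneg _)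
  have hΛd : Λ = c / d := by rw [hΛ, hcdef, hddef]
  have hΛpos : 0 < Λ := by rw [hΛd]; positivity
  have hΛc : Λ * d = c := by rw [hΛd]; field_simp
  set B1 := Λ - (1+3*(a*b))*c with hB1
  set B0 := a*b*(1-a*b)^2*c^2*d with hB0
  -- basic substitution identities
  have habd : a*b*d = u*v := by
    rw [ha, hb, hddef]; exact habdAux u v hune hvne
  have habd2 : a*b*(1-a*b)^2*d^3 = u*v*(1-u-v)^2 := by
    rw [ha, hb, hddef]; exact habd2Aux u v hune hvne
  have eq2d : (3*(a*b)^2-a-b-a*b)*d^2 = a*b*(1-a*b)^2*d^3 + (1+3*(a*b))*d - 1 := by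
    rw [ha, hb, hddef]; exact eq2dAux u v hune hvne
  -- coefficient identities
  have eq1 : (1+3*(a*b))*c = Λ - B1 := by rw [hB1]; ring
  have eq2 : (3*(a*b)^2-a-b-a*b)*c^2 = B0 - Λ*B1 := by
    have key : ((3*(a*b)^2-a-b-a*b)*c^2)*d^2 = (B0 - Λ*B1)*d^2 := by
      rw [hB0, hB1]
      linear_combination c^2 * eq2d - (-(Λ*d) - c + (1+3*(a*b))*c*d) * hΛc
    exact mul_right_cancel₀ (pow_ne_zero 2 hdne) key
  have eq3 : a*b*(1-a*b)^2*c^3 = Λ*B0 := by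
    rw [hB0]; linear_combination -(a*b*(1-a*b)^2*c^2) * hΛc
  -- scaled quantities
  have hB0d : B0*d^2 = u*v*(1-u-v)^2*c^2 := by
    rw [hB0]; linear_combination c^2 * habd2
  have hΛ2d : Λ^2*d^2 = c^2 := by linear_combination (Λ*d + c) * hΛc
  have hB1Λd : B1*Λ*d^2 = (1-d-3*(u*v))*c^2 := by
    rw [hB1]
    linear_combination (Λ*d + c - (1+3*(a*b))*c*d) * hΛc - 3*c^2 * habd
  -- inequalities
  have hB0nn : 0 ≤ B0 := by
    rw [hB0]
    have hab : (0:ℝ) ≤ a*b := mul_nonneg ha0 hb0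
    positivity
  have hd2 : (0:ℝ) < d^2 := by positivity
  have hB0le : B0 ≤ Λ^2 := by
    have key : u*v*(1-u-v)^2 ≤ 1 := keyG u v hu hu1 hv hv1
    have hmul : B0*d^2 ≤ Λ^2*d^2 := by
      rw [hB0d, hΛ2d]
      have h2c := mul_le_mul_of_nonneg_right key (sq_nonneg c)
      rw [one_mul] at h2c
      exact h2c
    exact le_of_mul_le_mul_right hmul hd2
  have hineq1 : B1*Λ ≤ Λ^2 + B0 := by
    have hmul : B1*Λ*d^2 ≤ (Λ^2+B0)*d^2 := by
      rw [hB1Λd, add_mul, hB0d, hΛ2d]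
      exact ineqB u v c d hd.le (mul_nonneg hu.le hv.le)
        (mul_nonneg (mul_nonneg hu.le hv.le) (sq_nonneg _))
    exact le_of_mul_le_mul_right hmul hd2
  have hineq2 : -(Λ^2 + B0) ≤ B1*Λ := by
    have hF : d + 3*(u*v) ≤ 2 + u*v*(1-u-v)^2 := by
      rw [hddef]; exact keyF u v hu hu1 hv hv1
    have hmul : (-(Λ^2+B0))*d^2 ≤ B1*Λ*d^2 := by
      rw [neg_mul, hB1Λd, add_mul, hB0d, hΛ2d]
      exact ineqC u v c d hF
    exact le_of_mul_le_mul_right hmul hd2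
  -- determinant factorization
  have hdet : ∀ μ : ℂ, (algebraMap ℂ (Matrix (Fin 3) (Fin 3) ℂ) μ - M).det
      = (μ - (Λ:ℂ)) * (μ^2 + (B1:ℂ)*μ + (B0:ℂ)) := by
    intro μ
    rw [hM, detFormula a b c μ, eq1, eq2, eq3]
    push_cast
    ring
  have hspec : ∀ μ : ℂ, μ ∈ spectrum ℂ M ↔
      (algebraMap ℂ (Matrix (Fin 3) (Fin 3) ℂ) μ - M).det = 0 := by
    intro μ
    rw [spectrum.mem_iff, Matrix.isUnit_iff_isUnit_det, isUnit_iff_ne_zero, not_ne_iff]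
  constructor
  · rw [hspec, hdet]; simp
  · intro μ hμ
    rw [hspec, hdet] at hμ
    rcases mul_eq_zero.mp hμ with h | h
    · have hμΛ : μ = (Λ:ℂ) := by linear_combination h
      rw [hμΛ]
      simp [Complex.norm_real, abs_of_pos hΛpos]
    · exact quadBound B1 B0 Λ hΛpos hB0le hineq1 hineq2 μ h
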